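/- arXiv:2009.09964 — 2 statements merged into one kernel-verified Lean document; each statement's English description precedes it below -/
import Mathlib

section
/- Let φ, ψ : [0;1] → [0;1]² be continuous paths with φ(0) = (0,0), φ(1) = (1,1), ψ(0) = (0,1), ψ(1) = (1,0), let f, g : [−1;2] → ℝ² be their trivial extensions, and fix a common modulus of uniform continuity md of f and g. Then there exist 5-approximations p = ((s₀,x₀),…,(s_k,x_k)) of f (on [−1;2]) and q = ((t₀,y₀),…,(t_l,y_l)) of g (on [−1;2]) such that all vertices x₀,…,x_k of p are pairwise distinct, all vertices y₀,…,y_l of q are pairwise distinct, 𝒱(p) ∩ 𝓛̄(q) = ∅ and 𝒱(q) ∩ 𝓛̄(p) = ∅. -/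
noncomputable section

abbrev Plane := EuclideanSpace ℝ (Fin 2)

def pt (a b : ℝ) : Plane := WithLp.toLp 2 ![a, b]

def unitSquare : Set Plane := {z | z 0 ∈ Set.Icc (0:ℝ) 1 ∧ z 1 ∈ Set.Icc (0:ℝ) 1}

structure Track where
  k : ℕ
  s : ℕ → ℝ
  x : ℕ → Plane
  mono : ∀ i < k, s i < s (i + 1)
  ne : ∀ i < k, x i ≠ x (i + 1)

def Track.seg (p : Track) (t : ℝ) : ℕ := sSup {i | i < p.k ∧ p.s i ≤ t}

def Track.path (p : Track) (t : ℝ) : Plane :=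
  p.x (p.seg t) + ((t - p.s (p.seg t)) / (p.s (p.seg t + 1) - p.s (p.seg t))) •
    (p.x (p.seg t + 1) - p.x (p.seg t))

def Track.rangeSet (p : Track) : Set Plane := p.path '' Set.Icc (p.s 0) (p.s p.k)

def Track.V (p : Track) : Set Plane := {z | ∃ i ≤ p.k, z = p.x i}

def line (x y : Plane) : Set Plane := (affineSpan ℝ {x, y} : Set Plane)

def Track.L (p : Track) : Set Plane := {z | ∃ i < p.k, z ∈ line (p.x i) (p.x (i + 1))}

def Track.Lbar (p : Track) : Set Plane :=
  {z | ∃ i ≤ p.k, ∃ j ≤ p.k, p.x i ≠ p.x j ∧ z ∈ line (p.x i) (p.x j)}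

def IsSegSet (S : Set Plane) : Prop := ∃ x y : Plane, x ≠ y ∧ S = segment ℝ x y

def NoCommonSegment (p q : Track) : Prop :=
  ¬ ∃ S : Set Plane, IsSegSet S ∧ S ⊆ p.rangeSet ∧ S ⊆ q.rangeSet

def WSep (p q : Track) : Prop := p.V ∩ q.L = ∅ ∧ q.V ∩ p.L = ∅

def IsInter (p q : Track) (s t : ℝ) : Prop :=
  p.s 0 < s ∧ s < p.s p.k ∧ q.s 0 < t ∧ t < q.s q.k ∧ p.path s = q.path t

def Admissible (p q : Track) (x : Plane) (δ : ℝ) : Prop :=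
  0 < δ ∧ ∀ v ∈ p.V ∪ q.V, v ∈ Metric.ball x δ → v = x

def entryParam (p : Track) (s δ : ℝ) (x : Plane) : ℝ :=
  sInf {s' | s' < s ∧ p.path '' Set.Icc s' s ⊆ Metric.ball x δ}

def exitParam (p : Track) (s δ : ℝ) (x : Plane) : ℝ :=
  sSup {s' | s < s' ∧ p.path '' Set.Icc s s' ⊆ Metric.ball x δ}

def Alternates (x : Plane) (δ : ℝ) (a b c d : Plane) : Prop :=
  c ∈ Metric.sphere x δ \ {a, b} ∧ d ∈ Metric.sphere x δ \ {a, b} ∧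
  connectedComponentIn (Metric.sphere x δ \ {a, b}) c ≠
    connectedComponentIn (Metric.sphere x δ \ {a, b}) d

def CrossAt (p q : Track) (s t δ : ℝ) : Prop :=
  Alternates (p.path s) δ
    (p.path (entryParam p s δ (p.path s))) (p.path (exitParam p s δ (p.path s)))
    (q.path (entryParam q t δ (p.path s))) (q.path (exitParam q t δ (p.path s)))

def IsCrossing (p q : Track) (s t : ℝ) : Prop :=
  IsInter p q s t ∧ ∃ δ : ℝ, Admissible p q (p.path s) δ ∧ CrossAt p q s t δ

def CN (p q : Track) : ℕ := {st : ℝ × ℝ | IsCrossing p q st.1 st.2}.ncard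

def par (p q : Track) : ℕ := CN p q % 2

def ds (A B : Set Plane) : ℝ := sInf {r | ∃ a ∈ A, ∃ b ∈ B, r = ‖a - b‖}

def alphaIJ (f g : ℝ → Plane) (aI bI aJ bJ : ℝ) : ℝ :=
  min (ds {f aI, f bI} (g '' Set.Icc aJ bJ)) (ds {g aJ, g bJ} (f '' Set.Icc aI bI))

def IsModulus2 (f g : ℝ → Plane) (md : ℕ → ℕ) : Prop :=
  Monotone md ∧ ∀ n : ℕ, ∀ t ∈ Set.Icc (-1:ℝ) 2, ∀ t' ∈ Set.Icc (-1:ℝ) 2,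
    |t - t'| < (2:ℝ) ^ (-(md n : ℤ)) →
    ‖f t - f t'‖ < (2:ℝ) ^ (-(n : ℤ)) ∧ ‖g t - g t'‖ < (2:ℝ) ^ (-(n : ℤ))

def IsApprox (f : ℝ → Plane) (md : ℕ → ℕ) (a b : ℝ) (n : ℕ) (p : Track) : Prop :=
  p.s 0 = a ∧ p.s p.k = b ∧
  (∀ i < p.k, p.s (i + 1) - p.s i < (2:ℝ) ^ (-(md n : ℤ))) ∧
  (∀ i ≤ p.k, ‖f (p.s i) - p.x i‖ < (2:ℝ) ^ (-(n : ℤ)))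

def ParityIs (f g : ℝ → Plane) (md : ℕ → ℕ) (aI bI aJ bJ : ℝ) (b : ℕ) : Prop :=
  ∀ n : ℕ, (2:ℝ) ^ (-(n : ℤ)) < alphaIJ f g aI bI aJ bJ / 16 →
    ∀ p q : Track, IsApprox f md aI bI n p → IsApprox g md aJ bJ n q → WSep p q →
      par p q = b

def IsModulus1 (f : ℝ → Plane) (md : ℕ → ℕ) : Prop :=
  Monotone md ∧ ∀ n : ℕ, ∀ t ∈ Set.Icc (-1:ℝ) 2, ∀ t' ∈ Set.Icc (-1:ℝ) 2,
    |t - t'| < (2:ℝ) ^ (-(md n : ℤ)) → ‖f t - f t'‖ < (2:ℝ) ^ (-(n : ℤ))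

def nbhdU (A : Set Plane) (δ : ℝ) : Set Plane := {x | ∃ y ∈ A, ‖x - y‖ < δ}

def extF (φ : ℝ → Plane) (t : ℝ) : Plane :=
  if t ≤ 0 then pt t 0 else if t ≤ 1 then φ t else pt t 1

def extG (ψ : ℝ → Plane) (t : ℝ) : Plane :=
  if t ≤ 0 then pt t 1 else if t ≤ 1 then ψ t else pt t 0


/-! Auxiliary lemmas -/


lemma mem_line_iff {a b z : Plane} : z ∈ line a b ↔ ∃ r : ℝ, z = a + r • (b - a) := by
  have h := vadd_left_mem_affineSpan_pair (k := ℝ) (p₁ := a) (p₂ := b) (v := z - a)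
  simp only [vadd_eq_add, vsub_eq_sub, sub_add_cancel] at h
  constructor
  · intro hz
    obtain ⟨r, hr⟩ := h.1 hz
    exact ⟨r, by rw [hr]; abel⟩
  · rintro ⟨r, rfl⟩
    exact h.2 ⟨r, by abel⟩

def hyp (a b : Plane) : Set Plane :=
  {z | (b 0 - a 0) * (z 1 - a 1) - (b 1 - a 1) * (z 0 - a 0) = 0}

lemma line_subset_hyp (a b : Plane) : line a b ⊆ hyp a b := by
  intro z hz
  obtain ⟨r, rfl⟩ := mem_line_iff.1 hz
  simp only [hyp, Set.mem_setOf_eq, PiLp.add_apply, PiLp.smul_apply, PiLp.sub_apply,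
    smul_eq_mul]
  ring

lemma cont_coord (i : Fin 2) : Continuous (fun z : Plane => z i) :=
  (EuclideanSpace.proj i).continuous

lemma hyp_closed (a b : Plane) : IsClosed (hyp a b) := by
  have : hyp a b = (fun z : Plane =>
      (b 0 - a 0) * (z 1 - a 1) - (b 1 - a 1) * (z 0 - a 0)) ⁻¹' {0} := rfl
  rw [this]
  exact IsClosed.preimage
    ((((continuous_const.mul ((cont_coord 1).sub continuous_const))).sub
      ((continuous_const.mul ((cont_coord 0).sub continuous_const))))) isClosed_singleton

lemma hyp_compl_dense {a b : Plane} (hab : a ≠ b) : Dense (hyp a b)ᶜ := by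
  rw [← interior_eq_empty_iff_dense_compl]
  by_contra h
  obtain ⟨z, hz⟩ := Set.nonempty_iff_ne_empty.2 h
  obtain ⟨ε, hε, hball⟩ := Metric.isOpen_iff.1 isOpen_interior z hz
  set n : Plane := WithLp.toLp 2 ![-(b 1 - a 1), b 0 - a 0] with hn
  have hzmem : z ∈ hyp a b := interior_subset hz
  have hd : (b 0 - a 0)^2 + (b 1 - a 1)^2 ≠ 0 := by
    intro h0
    apply hab
    have h1 : b 0 - a 0 = 0 := by nlinarith [sq_nonneg (b 0 - a 0), sq_nonneg (b 1 - a 1)]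
    have h2 : b 1 - a 1 = 0 := by nlinarith [sq_nonneg (b 0 - a 0), sq_nonneg (b 1 - a 1)]
    ext i
    fin_cases i
    · show a 0 = b 0; linarith
    · show a 1 = b 1; linarith
  have hn0 : n 0 = -(b 1 - a 1) := rfl
  have hn1 : n 1 = b 0 - a 0 := rfl
  have hnne : n ≠ 0 := by
    intro h0
    apply hd
    have h0' : n 0 = 0 := by rw [h0]; rfl
    have h1' : n 1 = 0 := by rw [h0]; rfl
    rw [hn0] at h0'; rw [hn1] at h1'
    nlinarith
  have hnorm : 0 < ‖n‖ := norm_pos_iff.mpr hnne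
  set t : ℝ := ε / (2 * ‖n‖) with ht
  have htpos : 0 < t := div_pos hε (by linarith)
  have hw : z + t • n ∈ Metric.ball z ε := by
    rw [Metric.mem_ball, dist_eq_norm]
    have : z + t • n - z = t • n := by abel
    rw [this, norm_smul, Real.norm_eq_abs, abs_of_pos htpos, ht]
    rw [div_mul_eq_mul_div, mul_comm]
    rw [div_lt_iff₀ (by linarith)]
    nlinarith
  have hwmem : z + t • n ∈ hyp a b := interior_subset (hball hw)
  simp only [hyp, Set.mem_setOf_eq, PiLp.add_apply, PiLp.smul_apply, smul_eq_mul] at hwmem hzmem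
  rw [hn0, hn1] at hwmem
  have : t * ((b 0 - a 0)^2 + (b 1 - a 1)^2) = 0 := by nlinarith
  exact hd (by
    have := mul_eq_zero.1 this
    rcases this with h' | h'
    · exact absurd h' (ne_of_gt htpos)
    · exact h')

lemma line_rev {a m x : Plane} (hma : m ≠ a) (hm : m ∈ line a x) : x ∈ line a m := by
  obtain ⟨r, hr⟩ := mem_line_iff.1 hm
  have hr0 : r ≠ 0 := by
    intro h0; apply hma; rw [hr, h0]; simp
  refine mem_line_iff.2 ⟨r⁻¹, ?_⟩
  rw [hr]
  rw [show a + r • (x - a) - a = r • (x - a) by abel, smul_smul, inv_mul_cancel₀ hr0, one_smul]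
  abel


lemma line_comm (a b : Plane) : line a b = line b a := by
  unfold line; rw [Set.pair_comm]

lemma dense_open_biInter {α : Type} [DecidableEq α] (s : Finset α) (U : α → Set Plane)
    (h : ∀ a ∈ s, IsOpen (U a) ∧ Dense (U a)) :
    IsOpen (⋂ a ∈ s, U a) ∧ Dense (⋂ a ∈ s, U a) := by
  induction s using Finset.induction_on with
  | empty => simp [isOpen_univ, dense_univ]
  | @insert a s hni ih =>
    rw [Finset.set_biInter_insert]
    have ha := h a (Finset.mem_insert_self a s)
    have hs := ih (fun b hb => h b (Finset.mem_insert_of_mem hb))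
    exact ⟨ha.1.inter hs.1, ha.2.inter_of_isOpen_left hs.2 ha.1⟩

lemma exists_avoid (c : Plane) (ε : ℝ) (hε : 0 < ε) (n : ℕ) (B : ℕ → ℕ → Set Plane)
    (hB : ∀ i < n, ∀ j < n, IsOpen (B i j)ᶜ ∧ Dense (B i j)ᶜ) :
    ∃ x : Plane, dist x c < ε ∧ ∀ i < n, ∀ j < n, x ∉ B i j := by
  set s : Finset (ℕ × ℕ) := Finset.range n ×ˢ Finset.range n with hs
  have hD := dense_open_biInter s (fun ij => (B ij.1 ij.2)ᶜ) (by
    intro a ha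
    rw [hs, Finset.mem_product, Finset.mem_range, Finset.mem_range] at ha
    exact hB a.1 ha.1 a.2 ha.2)
  obtain ⟨x, hxD, hxball⟩ := hD.2.exists_mem_open Metric.isOpen_ball
    ⟨c, Metric.mem_ball_self hε⟩
  refine ⟨x, by rwa [← Metric.mem_ball], ?_⟩

  intro i hi j hj
  have : (i, j) ∈ s := by
    rw [hs, Finset.mem_product, Finset.mem_range, Finset.mem_range]; exact ⟨hi, hj⟩
  exact Set.mem_iInter₂.1 hxD (i, j) this

lemma generic_points (c : ℕ → Plane) (ε : ℝ) (hε : 0 < ε) (n : ℕ) :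
    ∃ v : ℕ → Plane, (∀ i < n, dist (v i) (c i) < ε) ∧
      (∀ i < n, ∀ j < n, i ≠ j → v i ≠ v j) ∧
      (∀ i < n, ∀ j < n, ∀ m < n, i ≠ j → i ≠ m → j ≠ m → v m ∉ line (v i) (v j)) := by
  induction n with
  | zero => exact ⟨fun _ => 0, by omega, by omega, by omega⟩
  | succ n ih =>
    obtain ⟨v, h1, h2, h3⟩ := ih
    obtain ⟨x, hx1, hx2⟩ := exists_avoid (c n) ε hε n
      (fun i j => if i = j then {v i} else hyp (v i) (v j))
      (by
        intro i hi j hj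
        by_cases hij : i = j
        · simp only [hij, if_pos rfl]
          exact ⟨isOpen_compl_singleton, dense_compl_singleton _⟩
        · simp only [if_neg hij]
          exact ⟨(hyp_closed _ _).isOpen_compl, hyp_compl_dense (h2 i hi j hj hij)⟩)
    have hxne : ∀ i < n, x ≠ v i := by
      intro i hi h
      exact hx2 i hi i hi (by simp [h])
    have hxhyp : ∀ i < n, ∀ j < n, i ≠ j → x ∉ hyp (v i) (v j) := by
      intro i hi j hj hij h
      exact hx2 i hi j hj (by simp [if_neg hij, h])
    refine ⟨Function.update v n x, ?_, ?_, ?_⟩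
    · intro i hi
      rcases Nat.lt_succ_iff_lt_or_eq.1 hi with hi' | rfl
      · rw [Function.update_of_ne (by omega)]; exact h1 i hi'
      · rw [Function.update_self]; exact hx1
    · intro i hi j hj hij
      rcases Nat.lt_succ_iff_lt_or_eq.1 hi with hi' | rfl <;>
        rcases Nat.lt_succ_iff_lt_or_eq.1 hj with hj' | hj''
      · rw [Function.update_of_ne (by omega), Function.update_of_ne (by omega)]
        exact h2 i hi' j hj' hij
      · subst hj''
        rw [Function.update_of_ne (by omega), Function.update_self]
        exact (hxne i hi').symm
      · rw [Function.update_self, Function.update_of_ne (by omega)]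
        exact hxne j hj'
      · omega
    · intro i hi j hj m hm hij him hjm
      rcases Nat.lt_succ_iff_lt_or_eq.1 hi with hi' | rfl <;>
        rcases Nat.lt_succ_iff_lt_or_eq.1 hj with hj' | hj'' <;>
        rcases Nat.lt_succ_iff_lt_or_eq.1 hm with hm' | hm''
      -- all < n
      · rw [Function.update_of_ne (by omega), Function.update_of_ne (by omega),
          Function.update_of_ne (by omega)]
        exact h3 i hi' j hj' m hm' hij him hjm
      -- m = n
      · subst hm''
        rw [Function.update_of_ne (by omega), Function.update_of_ne (by omega),
          Function.update_self]
        intro hmem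
        exact hxhyp i hi' j hj' hij (line_subset_hyp _ _ hmem)
      -- j = n, m < n
      · subst hj''
        rw [Function.update_of_ne (by omega), Function.update_self,
          Function.update_of_ne (by omega)]
        intro hmem
        have hmi : v m ≠ v i := h2 m hm' i hi' (by omega)
        have := line_rev hmi hmem
        exact hxhyp i hi' m hm' (by omega) (line_subset_hyp _ _ this)
      · omega
      -- i = n, j,m < n
      · rw [Function.update_self, Function.update_of_ne (by omega),
          Function.update_of_ne (by omega)]
        rw [line_comm]
        intro hmem
        have hmj : v m ≠ v j := h2 m hm' j hj' (by omega)
        have := line_rev hmj hmem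
        exact hxhyp j hj' m hm' (by omega) (line_subset_hyp _ _ this)
      · omega
      · omega
      · omega

theorem good_five_approximations_exist (φ ψ : ℝ → Plane)
    (hφc : ContinuousOn φ (Set.Icc 0 1)) (hψc : ContinuousOn ψ (Set.Icc 0 1))
    (hφm : ∀ t ∈ Set.Icc (0:ℝ) 1, φ t ∈ unitSquare)
    (hψm : ∀ t ∈ Set.Icc (0:ℝ) 1, ψ t ∈ unitSquare)
    (hφ0 : φ 0 = pt 0 0) (hφ1 : φ 1 = pt 1 1)
    (hψ0 : ψ 0 = pt 0 1) (hψ1 : ψ 1 = pt 1 0)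
    (md : ℕ → ℕ) (hmd : IsModulus2 (extF φ) (extG ψ) md) :
    ∃ p q : Track,
      IsApprox (extF φ) md (-1) 2 5 p ∧ IsApprox (extG ψ) md (-1) 2 5 q ∧
      (∀ i ≤ p.k, ∀ j ≤ p.k, i ≠ j → p.x i ≠ p.x j) ∧
      (∀ i ≤ q.k, ∀ j ≤ q.k, i ≠ j → q.x i ≠ q.x j) ∧
      p.V ∩ q.Lbar = ∅ ∧ q.V ∩ p.Lbar = ∅ := by
  classical
  obtain ⟨K, hK0, hsmall⟩ : ∃ K : ℕ, 0 < K ∧ (3:ℝ) / K < (2:ℝ) ^ (-(md 5 : ℤ)) := by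
    refine ⟨3 * 2 ^ (md 5) + 1, by positivity, ?_⟩
    have hM : (0:ℝ) < 2 ^ (md 5) := by positivity
    rw [zpow_neg, zpow_natCast]
    push_cast
    rw [div_lt_iff₀ (by positivity), inv_mul_eq_div, lt_div_iff₀ hM]
    nlinarith
  have hKpos : (0:ℝ) < (K:ℝ) := by exact_mod_cast hK0
  have hKne : (K:ℝ) ≠ 0 := ne_of_gt hKpos
  set sP : ℕ → ℝ := fun i => -1 + 3 * (i:ℝ) / K with hsP
  have hstep : ∀ i : ℕ, sP (i+1) - sP i = 3 / K := by
    intro i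
    simp only [hsP]
    push_cast
    ring
  set ε : ℝ := (2:ℝ) ^ (-((5:ℕ) : ℤ)) with hεdef
  have hε : 0 < ε := by positivity
  set c : ℕ → Plane := fun i =>
    if i ≤ K then extF φ (sP i) else extG ψ (sP (i - (K+1))) with hc
  obtain ⟨v, hv1, hv2, hv3⟩ := generic_points c ε hε (2*K+2)
  clear_value sP ε c
  have hmono : ∀ i, sP i < sP (i+1) := by
    intro i
    have h1 := hstep i
    have h2 : (0:ℝ) < 3 / K := by positivity
    linarith
  set p : Track :=
    { k := K, s := sP, x := fun i => v (min i K),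
      mono := fun i _ => hmono i,
      ne := by
        intro i hi
        simp only [min_eq_left (le_of_lt hi), min_eq_left (Nat.succ_le_of_lt hi)]
        exact hv2 i (by omega) (i+1) (by omega) (by omega) } with hp
  set q : Track :=
    { k := K, s := sP, x := fun j => v (K + 1 + min j K),
      mono := fun i _ => hmono i,
      ne := by
        intro i hi
        simp only [min_eq_left (le_of_lt hi), min_eq_left (Nat.succ_le_of_lt hi)]
        exact hv2 (K+1+i) (by omega) (K+1+(i+1)) (by omega) (by omega) } with hq
  have hpx : ∀ i ≤ K, p.x i = v i := by
    intro i hi; simp only [hp, min_eq_left hi]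
  have hqx : ∀ j ≤ K, q.x j = v (K + 1 + j) := by
    intro j hj; simp only [hq, min_eq_left hj]
  have hs0 : sP 0 = -1 := by simp [hsP]
  have hsK : sP K = 2 := by
    simp only [hsP]
    field_simp
    ring
  have hcF : ∀ i, i ≤ K → c i = extF φ (sP i) := by
    intro i hi; simp only [hc]; rw [if_pos hi]
  have hcG : ∀ j : ℕ, c (K+1+j) = extG ψ (sP j) := by
    intro j; simp only [hc]; rw [if_neg (by omega), show K+1+j - (K+1) = j from by omega]
  have hdistF : ∀ i ≤ K, ‖extF φ (sP i) - p.x i‖ < ε := by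
    intro i hi
    rw [hpx i hi, ← dist_eq_norm, dist_comm]
    have := hv1 i (by omega)
    rwa [hcF i hi] at this
  have hdistG : ∀ j ≤ K, ‖extG ψ (sP j) - q.x j‖ < ε := by
    intro j hj
    rw [hqx j hj, ← dist_eq_norm, dist_comm]
    have := hv1 (K+1+j) (by omega)
    rwa [hcG j] at this
  have hpk : p.k = K := rfl
  have hqk : q.k = K := rfl
  refine ⟨p, q, ⟨hs0, hsK, ?_, ?_⟩, ⟨hs0, hsK, ?_, ?_⟩, ?_, ?_, ?_, ?_⟩
  · intro i _; rw [show p.s = sP from rfl, hstep i]; exact hsmall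
  · intro i hi
    rw [hpk] at hi
    have := hdistF i hi
    rwa [hεdef] at this
  · intro i _; rw [show q.s = sP from rfl, hstep i]; exact hsmall
  · intro j hj
    rw [hqk] at hj
    have := hdistG j hj
    rwa [hεdef] at this
  · intro i hi j hj hij
    rw [hpk] at hi hj
    rw [hpx i hi, hpx j hj]
    exact hv2 i (by omega) j (by omega) hij
  · intro i hi j hj hij
    rw [hqk] at hi hj
    rw [hqx i hi, hqx j hj]
    exact hv2 (K+1+i) (by omega) (K+1+j) (by omega) (by omega)
  · rw [Set.eq_empty_iff_forall_notMem]
    rintro z ⟨⟨i, hi, rfl⟩, j, hj, j', hj', hne, hmem⟩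
    rw [hpk] at hi
    rw [hqk] at hj hj'
    rw [hqx j hj, hqx j' hj'] at hne hmem
    rw [hpx i hi] at hmem
    have hjj' : j ≠ j' := fun h => hne (by rw [h])
    exact hv3 (K+1+j) (by omega) (K+1+j') (by omega) i (by omega)
      (by omega) (by omega) (by omega) hmem
  · rw [Set.eq_empty_iff_forall_notMem]
    rintro z ⟨⟨j, hj, rfl⟩, i, hi, i', hi', hne, hmem⟩
    rw [hqk] at hj
    rw [hpk] at hi hi'
    rw [hpx i hi, hpx i' hi'] at hne hmem
    rw [hqx j hj] at hmem
    have hii' : i ≠ i' := fun h => hne (by rw [h])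
    exact hv3 i (by omega) i' (by omega) (K+1+j) (by omega)
      (by omega) (by omega) (by omega) hmem

end
end

section
/- Let f, g : [−1;2] → ℝ² be continuous, and let I₀ ⊇ I₁ ⊇ I₂ ⊇ … and J₀ ⊇ J₁ ⊇ J₂ ⊇ … be nested sequences of nonempty closed intervals contained in [−1;2] such that for all m ≥ 1, f(I_m) ⊆ U(g(J_{m−1}), 2^{−(m−1)}) and g(J_m) ⊆ U(f(I_m), 2⁻ᵐ). Then f(⋂_m I_m) = g(⋂_m J_m). -/
noncomputable section

lemma two_zpow_neg_eq (k : ℕ) : (2:ℝ) ^ (-(k : ℤ)) = (1/2:ℝ) ^ k := by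
  rw [zpow_neg, zpow_natCast, ← one_div, div_pow, one_pow]

/-- If a point lies in the closure of each image `g '' Icc (c m) (d m)` of a nested
sequence of nonempty compact intervals inside `[-1,2]`, it lies in the image of the
intersection. -/
lemma mem_image_iInter_of_mem_closures (g : ℝ → Plane)
    (hg : ContinuousOn g (Set.Icc (-1:ℝ) 2)) (c d : ℕ → ℝ)
    (hcd : ∀ m, c m ≤ d m)
    (hJsub : ∀ m, Set.Icc (c m) (d m) ⊆ Set.Icc (-1:ℝ) 2)
    (hJnest : ∀ m, Set.Icc (c (m + 1)) (d (m + 1)) ⊆ Set.Icc (c m) (d m))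
    (y : Plane) (hy : ∀ m, y ∈ closure (g '' Set.Icc (c m) (d m))) :
    y ∈ g '' (⋂ m, Set.Icc (c m) (d m)) := by
  -- each image is compact hence closed
  have himg : ∀ m, y ∈ g '' Set.Icc (c m) (d m) := by
    intro m
    have hcomp : IsCompact (g '' Set.Icc (c m) (d m)) :=
      (isCompact_Icc).image_of_continuousOn (hg.mono (hJsub m))
    exact hcomp.isClosed.closure_subset (hy m)
  -- the fibers over y form a nested sequence of nonempty compact sets
  set K : ℕ → Set ℝ := fun m => Set.Icc (c m) (d m) ∩ g ⁻¹' {y} with hK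
  have hKclosed : ∀ m, IsClosed (K m) := by
    intro m
    exact ContinuousOn.preimage_isClosed_of_isClosed (hg.mono (hJsub m))
      isClosed_Icc isClosed_singleton
  have hKne : ∀ m, (K m).Nonempty := by
    intro m
    obtain ⟨t, ht, hty⟩ := himg m
    exact ⟨t, ht, by simpa using hty⟩
  have hKnest : ∀ m, K (m + 1) ⊆ K m := fun m =>
    Set.inter_subset_inter_left _ (hJnest m)
  have hKcomp : ∀ m, IsCompact (K m) :=
    fun m => (isCompact_Icc).of_isClosed_subset (hKclosed m) Set.inter_subset_left
  obtain ⟨t, ht⟩ := IsCompact.nonempty_iInter_of_sequence_nonempty_isCompact_isClosed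
    K hKnest hKne (hKcomp 0) hKclosed
  refine ⟨t, ?_, ?_⟩
  · exact Set.mem_iInter.2 fun m => ((Set.mem_iInter.1 ht m)).1
  · have := ((Set.mem_iInter.1 ht 0)).2
    simpa using this

lemma antitone_Icc_of_nest (c d : ℕ → ℝ)
    (hJnest : ∀ m, Set.Icc (c (m + 1)) (d (m + 1)) ⊆ Set.Icc (c m) (d m)) :
    Antitone (fun m => Set.Icc (c m) (d m)) :=
  antitone_nat_of_succ_le hJnest

theorem images_of_nested_intersections_equal (f g : ℝ → Plane)
    (hf : ContinuousOn f (Set.Icc (-1:ℝ) 2)) (hg : ContinuousOn g (Set.Icc (-1:ℝ) 2))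
    (a b c d : ℕ → ℝ)
    (hab : ∀ m, a m ≤ b m) (hcd : ∀ m, c m ≤ d m)
    (hIsub : ∀ m, Set.Icc (a m) (b m) ⊆ Set.Icc (-1:ℝ) 2)
    (hJsub : ∀ m, Set.Icc (c m) (d m) ⊆ Set.Icc (-1:ℝ) 2)
    (hInest : ∀ m, Set.Icc (a (m + 1)) (b (m + 1)) ⊆ Set.Icc (a m) (b m))
    (hJnest : ∀ m, Set.Icc (c (m + 1)) (d (m + 1)) ⊆ Set.Icc (c m) (d m))
    (h1 : ∀ m : ℕ, f '' Set.Icc (a (m + 1)) (b (m + 1)) ⊆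
      nbhdU (g '' Set.Icc (c m) (d m)) ((2:ℝ) ^ (-(m : ℤ))))
    (h2 : ∀ m : ℕ, g '' Set.Icc (c (m + 1)) (d (m + 1)) ⊆
      nbhdU (f '' Set.Icc (a (m + 1)) (b (m + 1))) ((2:ℝ) ^ (-((m : ℤ) + 1)))) :
    f '' (⋂ m, Set.Icc (a m) (b m)) = g '' (⋂ m, Set.Icc (c m) (d m)) := by
  have hIanti := antitone_Icc_of_nest a b hInest
  have hJanti := antitone_Icc_of_nest c d hJnest
  have hpow : ∀ ε : ℝ, 0 < ε → ∀ m : ℕ, ∃ k : ℕ, m ≤ k ∧ (2:ℝ) ^ (-(k : ℤ)) < ε := by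
    intro ε hε m
    obtain ⟨n, hn⟩ := exists_pow_lt_of_lt_one hε (by norm_num : (1/2:ℝ) < 1)
    refine ⟨max m n, le_max_left _ _, ?_⟩
    rw [two_zpow_neg_eq]
    calc (1/2:ℝ) ^ max m n ≤ (1/2:ℝ) ^ n :=
          pow_le_pow_of_le_one (by norm_num) (by norm_num) (le_max_right _ _)
      _ < ε := hn
  apply Set.Subset.antisymm
  · rintro y ⟨t, ht, rfl⟩
    apply mem_image_iInter_of_mem_closures g hg c d hcd hJsub hJnest
    intro m
    rw [Metric.mem_closure_iff]
    intro ε hε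
    obtain ⟨k, hmk, hkε⟩ := hpow ε hε m
    have htk : t ∈ Set.Icc (a (k + 1)) (b (k + 1)) := Set.mem_iInter.1 ht (k + 1)
    obtain ⟨u, hu, hyu⟩ := h1 k ⟨t, htk, rfl⟩
    refine ⟨u, Set.image_mono (f := g) (hJanti hmk) hu, ?_⟩
    rw [dist_eq_norm]
    exact hyu.trans hkε
  · rintro y ⟨t, ht, rfl⟩
    apply mem_image_iInter_of_mem_closures f hf a b hab hIsub hInest
    intro m
    rw [Metric.mem_closure_iff]
    intro ε hε
    obtain ⟨k, hmk, hkε⟩ := hpow ε hε m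
    have htk : t ∈ Set.Icc (c (k + 1)) (d (k + 1)) := Set.mem_iInter.1 ht (k + 1)
    obtain ⟨u, hu, hyu⟩ := h2 k ⟨t, htk, rfl⟩
    refine ⟨u, Set.image_mono (f := f) (hIanti (hmk.trans (Nat.le_succ k))) hu, ?_⟩
    rw [dist_eq_norm]
    refine hyu.trans (lt_of_le_of_lt ?_ hkε)
    exact zpow_le_zpow_right₀ (by norm_num) (by omega)


end
end
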